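/- Let B, N > 0 and φ ∈ C([0,T]). With G, G*, H, H* defined as the solution operators of the corresponding forward/backward (non-local) linear ODEs, one has G*(H(φ)) = H*(G(φ)) as functions on [0,T]. -/

import Mathlib

/-- If `f' = c * f` on `[0,T]` then `f t = f 0 * exp (c*t)`. -/
lemma exp_sol_aux {T c : ℝ} {f : ℝ → ℝ}
    (hf : ∀ t ∈ Set.Icc (0:ℝ) T, HasDerivWithinAt f (c * f t) (Set.Icc 0 T) t) :
    ∀ t ∈ Set.Icc (0:ℝ) T, f t = f 0 * Real.exp (c * t) := by
  have hg : ∀ s ∈ Set.Icc (0:ℝ) T,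
      HasDerivWithinAt (fun u => f u * Real.exp (-(c * u))) 0 (Set.Icc 0 T) s := by
    intro s hs
    have he : HasDerivAt (fun u : ℝ => Real.exp (-(c * u)))
        (Real.exp (-(c * s)) * (-c)) s := by
      have h1 : HasDerivAt (fun u : ℝ => -(c * u)) (-c) s := by
        exact (((hasDerivAt_id s).const_mul c).neg).congr_deriv (by ring)
      exact h1.exp
    have := (hf s hs).mul he.hasDerivWithinAt
    refine this.congr_deriv (Eq.symm ?_)
    ring
  have hconst : ∀ t ∈ Set.Icc (0:ℝ) T,
      f t * Real.exp (-(c * t)) = f 0 * Real.exp (-(c * 0)) := by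
    apply constant_of_has_deriv_right_zero
    · exact fun s hs => (hg s hs).continuousWithinAt
    · intro x hx
      refine (hg x ⟨hx.1, le_of_lt hx.2⟩).mono_of_mem_nhdsWithin ?_
      rw [mem_nhdsWithin]
      exact ⟨Set.Iio T, isOpen_Iio, hx.2, fun y hy => ⟨le_trans hx.1 hy.2, le_of_lt hy.1⟩⟩
  intro t ht
  have h := hconst t ht
  have hne : Real.exp (-(c * t)) ≠ 0 := Real.exp_ne_zero _
  rw [show (-(c*(0:ℝ))) = 0 by ring, Real.exp_zero, mul_one] at h
  have : f t = f 0 / Real.exp (-(c * t)) := by field_simp at h ⊢; linarith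
  rw [this, Real.exp_neg]
  field_simp

/-- `G*(H(φ)) = H*(G(φ))` on `[0,T]`. Here `Hφ = H(φ)` with
auxiliary `A = G*(H(φ))`; `Gφ = G(φ)`; and `Hs = H*(G(φ))` with auxiliary
`C = G(H*(G(φ)))`. -/
theorem stmt_5 (T B N : ℝ) (hT : 0 < T) (hB : 0 < B) (hN : 0 < N)
    (φ Gφ Gφ' Hφ Hφ' A A' Hs Hs' C C' : ℝ → ℝ)
    (hφ : ContinuousOn φ (Set.Icc 0 T))
    -- Gφ = G(φ)
    (hGd : ∀ t ∈ Set.Icc (0:ℝ) T, HasDerivWithinAt Gφ (Gφ' t) (Set.Icc 0 T) t)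
    (hGc : ContinuousOn Gφ' (Set.Icc 0 T))
    (hGeq : ∀ t ∈ Set.Icc (0:ℝ) T, Gφ' t + (B + N⁻¹) * Gφ t = φ t)
    (hG0 : Gφ 0 = 0)
    -- Hφ = H(φ), A = G*(Hφ)
    (hHd : ∀ t ∈ Set.Icc (0:ℝ) T, HasDerivWithinAt Hφ (Hφ' t) (Set.Icc 0 T) t)
    (hHc : ContinuousOn Hφ' (Set.Icc 0 T))
    (hAd : ∀ t ∈ Set.Icc (0:ℝ) T, HasDerivWithinAt A (A' t) (Set.Icc 0 T) t)
    (hAc : ContinuousOn A' (Set.Icc 0 T))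
    (hAeq : ∀ t ∈ Set.Icc (0:ℝ) T, -A' t + (B + N⁻¹) * A t = Hφ t)
    (hAT : A T = 0)
    (hHeq : ∀ t ∈ Set.Icc (0:ℝ) T,
      Hφ' t + (B + N⁻¹) * Hφ t - N⁻¹ * (B + N⁻¹) * A t = φ t)
    (hH0 : Hφ 0 = 0)
    -- Hs = H*(Gφ), C = G(Hs)
    (hHsd : ∀ t ∈ Set.Icc (0:ℝ) T, HasDerivWithinAt Hs (Hs' t) (Set.Icc 0 T) t)
    (hHsc : ContinuousOn Hs' (Set.Icc 0 T))
    (hCd : ∀ t ∈ Set.Icc (0:ℝ) T, HasDerivWithinAt C (C' t) (Set.Icc 0 T) t)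
    (hCc : ContinuousOn C' (Set.Icc 0 T))
    (hCeq : ∀ t ∈ Set.Icc (0:ℝ) T, C' t + (B + N⁻¹) * C t = Hs t)
    (hC0 : C 0 = 0)
    (hHseq : ∀ t ∈ Set.Icc (0:ℝ) T,
      -Hs' t + (B + N⁻¹) * Hs t - N⁻¹ * (B + N⁻¹) * C t = Gφ t)
    (hHsT : Hs T = 0) :
    ∀ t ∈ Set.Icc (0:ℝ) T, A t = Hs t := by
  set l : ℝ := B + N⁻¹ with hl_def
  have hNinv : 0 < N⁻¹ := inv_pos.mpr hN
  have hl : 0 < l := by positivity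
  have hBl : B < l := by rw [hl_def]; linarith
  set μ : ℝ := N⁻¹ * l with hμ_def
  set κ : ℝ := Real.sqrt (l * B) with hκ_def
  have hκpos : 0 < κ := Real.sqrt_pos.mpr (by positivity)
  have hκ2 : κ * κ = l * B := Real.mul_self_sqrt (by positivity)
  have hκlt : κ < l := by
    by_contra hcon
    push_neg at hcon
    nlinarith [mul_le_mul hcon hcon (le_of_lt hl) (le_of_lt (lt_of_lt_of_le hl hcon))]
  set w : ℝ → ℝ := fun t => Hφ t - Gφ t - μ * C t with hw_def
  set D : ℝ → ℝ := fun t => A t - Hs t with hD_def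
  -- derivatives of w and D
  have hwD : ∀ t ∈ Set.Icc (0:ℝ) T,
      HasDerivWithinAt w (μ * D t - l * w t) (Set.Icc 0 T) t := by
    intro t ht
    have h := ((hHd t ht).sub (hGd t ht)).sub ((hCd t ht).const_mul μ)
    refine h.congr_deriv (Eq.symm ?_)
    have h1 := hGeq t ht
    have h2 := hHeq t ht
    have h3 := hCeq t ht
    simp only [hw_def, hD_def]
    linear_combination h1 - h2 + μ * h3
  have hDD : ∀ t ∈ Set.Icc (0:ℝ) T,
      HasDerivWithinAt D (l * D t - w t) (Set.Icc 0 T) t := by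
    intro t ht
    have h := (hAd t ht).sub (hHsd t ht)
    refine h.congr_deriv (Eq.symm ?_)
    have h1 := hAeq t ht
    have h2 := hHseq t ht
    simp only [hw_def, hD_def]
    linear_combination h1 - h2
  -- eigenfunctions p = w - (l+κ)D, r = w - (l-κ)D
  set p : ℝ → ℝ := fun t => w t - (l + κ) * D t with hp_def
  set r : ℝ → ℝ := fun t => w t - (l - κ) * D t with hr_def
  have hμκ : l * l - μ = κ * κ := by
    rw [hκ2, hμ_def, hl_def]; ring
  have hpd : ∀ t ∈ Set.Icc (0:ℝ) T, HasDerivWithinAt p (κ * p t) (Set.Icc 0 T) t := by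
    intro t ht
    have h := (hwD t ht).sub ((hDD t ht).const_mul (l + κ))
    refine h.congr_deriv (Eq.symm ?_)
    simp only [hp_def]
    linear_combination (D t) * hμκ
  have hrd : ∀ t ∈ Set.Icc (0:ℝ) T, HasDerivWithinAt r ((-κ) * r t) (Set.Icc 0 T) t := by
    intro t ht
    have h := (hwD t ht).sub ((hDD t ht).const_mul (l - κ))
    refine h.congr_deriv (Eq.symm ?_)
    simp only [hr_def]
    linear_combination (D t) * hμκ
  have hpsol := exp_sol_aux hpd
  have hrsol := exp_sol_aux hrd
  -- boundary values
  have hw0 : w 0 = 0 := by simp only [hw_def]; rw [hH0, hG0, hC0]; ring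
  have hTmem : T ∈ Set.Icc (0:ℝ) T := ⟨le_of_lt hT, le_refl T⟩
  have hDT : D T = 0 := by simp only [hD_def]; rw [hAT, hHsT]; ring
  have hp0 : p 0 = -(l + κ) * D 0 := by simp only [hp_def]; rw [hw0]; ring
  have hr0 : r 0 = -(l - κ) * D 0 := by simp only [hr_def]; rw [hw0]; ring
  have hpT := hpsol T hTmem
  have hrT := hrsol T hTmem
  have hpTrT : p T = r T := by
    simp only [hp_def, hr_def]; rw [hDT]; ring
  -- exp bounds
  have hE1 : 1 < Real.exp (κ * T) := by
    have h := Real.exp_lt_exp.mpr (show (0:ℝ) < κ * T by positivity)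
    rwa [Real.exp_zero] at h
  have hE2 : Real.exp (-κ * T) < 1 := by
    have h := Real.exp_lt_exp.mpr (show -κ * T < 0 by nlinarith)
    rwa [Real.exp_zero] at h
  have hE2pos : 0 < Real.exp (-κ * T) := Real.exp_pos _
  -- deduce D 0 = 0
  have key : ((l + κ) * Real.exp (κ * T) - (l - κ) * Real.exp (-κ * T)) * D 0 = 0 := by
    linear_combination hpT - hrT - hpTrT + Real.exp (κ * T) * hp0 - Real.exp (-κ * T) * hr0
  have hfac : 0 < (l + κ) * Real.exp (κ * T) - (l - κ) * Real.exp (-κ * T) := by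
    have h1 : (l - κ) * Real.exp (-κ * T) < (l - κ) * 1 :=
      mul_lt_mul_of_pos_left hE2 (by linarith)
    have h2 : (l + κ) * 1 < (l + κ) * Real.exp (κ * T) :=
      mul_lt_mul_of_pos_left hE1 (by linarith)
    nlinarith
  have hD0 : D 0 = 0 := by
    rcases mul_eq_zero.mp key with h | h
    · exact absurd h (ne_of_gt hfac)
    · exact h
  have hpzero : ∀ t ∈ Set.Icc (0:ℝ) T, p t = 0 := by
    intro t ht; rw [hpsol t ht, hp0, hD0]; ring
  have hrzero : ∀ t ∈ Set.Icc (0:ℝ) T, r t = 0 := by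
    intro t ht; rw [hrsol t ht, hr0, hD0]; ring
  intro t ht
  have hpt := hpzero t ht
  have hrt := hrzero t ht
  simp only [hp_def, hr_def, hD_def] at hpt hrt
  have h2κ : 2 * κ * (A t - Hs t) = 0 := by linear_combination hrt - hpt
  rcases mul_eq_zero.mp h2κ with h | h
  · exact absurd h (by positivity)
  · linarith
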